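/- Let 2 < q < 4 and set p' = q/2. Let U ≥ 0 with ‖U‖_{q/(q-2)} = 1 and ψ ∈ L^q nonzero. Define H[ψ,U] = ‖ψ‖_q² − ∫ U ψ² dμ. Then H[ψ,U] ≥ ((q-2)/8) ‖ψ‖_q² ‖ |ψ|²/‖ψ‖_q² − U^{2/(q-2)} ‖_{q/2}². -/

import Mathlib

open MeasureTheory Real

noncomputable def Lnorm {X : Type*} [MeasurableSpace X] (μ : Measure X) (p : ℝ) (f : X → ℝ) : ℝ :=
  (∫ x, |f x| ^ p ∂μ) ^ (1 / p)

section BregmanSection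
open intervalIntegral

lemma my_mul_rpow_sub_one {a p : ℝ} (ha : 0 ≤ a) (hp : p ≠ 0) : a * a ^ (p - 1) = a ^ p := by
  rcases ha.eq_or_lt with rfl | ha'
  · simp [Real.zero_rpow hp]
  · calc a * a ^ (p - 1) = a ^ (1 : ℝ) * a ^ (p - 1) := by rw [Real.rpow_one]
      _ = a ^ (1 + (p - 1)) := (Real.rpow_add ha' _ _).symm
      _ = a ^ p := by ring_nf

lemma my_bregman {p : ℝ} (hp1 : 1 < p) (hp2 : p < 2) {a b : ℝ} (ha : 0 ≤ a) (hb : 0 ≤ b) :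
    (p - 1) / 2 * ((a - b) ^ 2 * (a + b) ^ (p - 2)) ≤
      a ^ p / p + (p - 1) / p * b ^ p - a * b ^ (p - 1) := by
  have hp0 : (0:ℝ) < p := by linarith
  have hpm2 : (-1:ℝ) < p - 2 := by linarith
  have hpm1 : (-1:ℝ) < p - 1 := by linarith
  rcases eq_or_lt_of_le (add_nonneg ha hb) with hab0 | hab
  · have ha0 : a = 0 := by linarith [hb, ha]
    have hb0 : b = 0 := by linarith [ha]
    subst ha0; subst hb0
    simp [Real.zero_rpow hp0.ne', Real.zero_rpow (show p - 2 ≠ 0 by linarith),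
      Real.zero_rpow (show p - 1 ≠ 0 by linarith)]
  · -- a + b > 0
    have h0ae : ∀ᵐ t : ℝ, t ≠ (0:ℝ) := by
      have : (volume : Measure ℝ) {(0:ℝ)} = 0 := Real.volume_singleton
      rw [ae_iff]
      simpa [Set.setOf_eq_eq_singleton] using this
    rcases le_total b a with hba | hba
    · -- b ≤ a, so a > 0
      have ha' : 0 < a := by linarith
      have I1 : IntervalIntegrable (fun t : ℝ => t ^ (p - 2)) volume b a :=
        intervalIntegrable_rpow' hpm2
      have I2 : IntervalIntegrable (fun t : ℝ => t ^ (p - 1)) volume b a :=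
        intervalIntegrable_rpow' hpm1
      have hInt1 : ∫ t in b..a, t ^ (p - 2) = (a ^ (p-1) - b ^ (p-1)) / (p-1) := by
        rw [integral_rpow (Or.inl hpm2), show p - 2 + 1 = p - 1 by ring]
      have hInt2 : ∫ t in b..a, t ^ (p - 1) = (a ^ p - b ^ p) / p := by
        rw [integral_rpow (Or.inl hpm1), show p - 1 + 1 = p by ring]
      have hcomb : a ^ p / p + (p - 1) / p * b ^ p - a * b ^ (p - 1)
          = ∫ t in b..a, ((p-1) * a * t ^ (p-2) - (p-1) * t ^ (p-1)) := by
        rw [intervalIntegral.integral_sub ((I1.const_mul _)) (I2.const_mul _),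
          intervalIntegral.integral_const_mul, intervalIntegral.integral_const_mul,
          hInt1, hInt2]
        have haa : a * a ^ (p-1) = a ^ p := my_mul_rpow_sub_one ha (by linarith)
        rw [← haa]
        have h1 : p - 1 ≠ 0 := by linarith
        field_simp
        ring
      have hmono : ∫ t in b..a, (a - t) * ((p-1) * (a+b) ^ (p-2))
          ≤ ∫ t in b..a, ((p-1) * a * t ^ (p-2) - (p-1) * t ^ (p-1)) := by
        apply intervalIntegral.integral_mono_ae_restrict hba
        · exact ((by continuity : Continuous _).intervalIntegrable _ _)
        · exact (I1.const_mul _).sub (I2.const_mul _)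
        · filter_upwards [MeasureTheory.ae_restrict_mem measurableSet_Icc,
            Filter.Eventually.filter_mono (MeasureTheory.ae_mono Measure.restrict_le_self) h0ae]
            with t ht htne
          have ht0 : 0 < t := lt_of_le_of_ne (le_trans hb ht.1) (Ne.symm htne)
          have htp : t ^ (p - 1) = t * t ^ (p - 2) := by
            rw [show p - 1 = 1 + (p-2) by ring, Real.rpow_add ht0, Real.rpow_one]
          have hpow : (a+b) ^ (p-2) ≤ t ^ (p-2) :=
            Real.rpow_le_rpow_of_nonpos ht0 (by linarith [ht.2]) (by linarith)
          have hat : 0 ≤ a - t := by linarith [ht.2]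
          calc (a - t) * ((p-1) * (a+b) ^ (p-2)) ≤ (a - t) * ((p-1) * t ^ (p-2)) := by
                apply mul_le_mul_of_nonneg_left _ hat
                exact mul_le_mul_of_nonneg_left hpow (by linarith)
            _ = (p-1) * a * t ^ (p-2) - (p-1) * t ^ (p-1) := by rw [htp]; ring
      have hval : ∫ t in b..a, (a - t) * ((p-1) * (a+b) ^ (p-2))
          = (p-1) * (a+b) ^ (p-2) * ((a-b)^2 / 2) := by
        have : ∫ t in b..a, (a - t) * ((p-1) * (a+b) ^ (p-2))
            = ((p-1) * (a+b) ^ (p-2)) * ∫ t in b..a, (a - t) := by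
          rw [← intervalIntegral.integral_const_mul]
          congr 1; ext t; ring
        rw [this, intervalIntegral.integral_sub ((by continuity : Continuous _).intervalIntegrable _ _)
          ((by continuity : Continuous _).intervalIntegrable _ _), intervalIntegral.integral_const,
          integral_id]
        simp only [smul_eq_mul]
        ring
      rw [hcomb]
      calc (p - 1) / 2 * ((a - b) ^ 2 * (a + b) ^ (p - 2))
          = (p-1) * (a+b) ^ (p-2) * ((a-b)^2 / 2) := by ring
        _ = ∫ t in b..a, (a - t) * ((p-1) * (a+b) ^ (p-2)) := hval.symm
        _ ≤ _ := hmono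
    · -- a ≤ b, so b > 0
      have hb' : 0 < b := by linarith
      have I1 : IntervalIntegrable (fun t : ℝ => t ^ (p - 2)) volume a b :=
        intervalIntegrable_rpow' hpm2
      have I2 : IntervalIntegrable (fun t : ℝ => t ^ (p - 1)) volume a b :=
        intervalIntegrable_rpow' hpm1
      have hInt1 : ∫ t in a..b, t ^ (p - 2) = (b ^ (p-1) - a ^ (p-1)) / (p-1) := by
        rw [integral_rpow (Or.inl hpm2), show p - 2 + 1 = p - 1 by ring]
      have hInt2 : ∫ t in a..b, t ^ (p - 1) = (b ^ p - a ^ p) / p := by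
        rw [integral_rpow (Or.inl hpm1), show p - 1 + 1 = p by ring]
      have hcomb : a ^ p / p + (p - 1) / p * b ^ p - a * b ^ (p - 1)
          = ∫ t in a..b, ((p-1) * t ^ (p-1) - (p-1) * a * t ^ (p-2)) := by
        rw [intervalIntegral.integral_sub ((I2.const_mul _)) (I1.const_mul _),
          intervalIntegral.integral_const_mul, intervalIntegral.integral_const_mul,
          hInt1, hInt2]
        have haa : a * a ^ (p-1) = a ^ p := my_mul_rpow_sub_one ha (by linarith)
        rw [← haa]
        have h1 : p - 1 ≠ 0 := by linarith
        field_simp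
        ring
      have hmono : ∫ t in a..b, (t - a) * ((p-1) * (a+b) ^ (p-2))
          ≤ ∫ t in a..b, ((p-1) * t ^ (p-1) - (p-1) * a * t ^ (p-2)) := by
        apply intervalIntegral.integral_mono_ae_restrict hba
        · exact ((by continuity : Continuous _).intervalIntegrable _ _)
        · exact (I2.const_mul _).sub (I1.const_mul _)
        · filter_upwards [MeasureTheory.ae_restrict_mem measurableSet_Icc,
            Filter.Eventually.filter_mono (MeasureTheory.ae_mono Measure.restrict_le_self) h0ae]
            with t ht htne
          have ht0 : 0 < t := lt_of_le_of_ne (le_trans ha ht.1) (Ne.symm htne)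
          have htp : t ^ (p - 1) = t * t ^ (p - 2) := by
            rw [show p - 1 = 1 + (p-2) by ring, Real.rpow_add ht0, Real.rpow_one]
          have hpow : (a+b) ^ (p-2) ≤ t ^ (p-2) :=
            Real.rpow_le_rpow_of_nonpos ht0 (by linarith [ht.2]) (by linarith)
          have hat : 0 ≤ t - a := by linarith [ht.1]
          calc (t - a) * ((p-1) * (a+b) ^ (p-2)) ≤ (t - a) * ((p-1) * t ^ (p-2)) := by
                apply mul_le_mul_of_nonneg_left _ hat
                exact mul_le_mul_of_nonneg_left hpow (by linarith)
            _ = (p-1) * t ^ (p-1) - (p-1) * a * t ^ (p-2) := by rw [htp]; ring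
      have hval : ∫ t in a..b, (t - a) * ((p-1) * (a+b) ^ (p-2))
          = (p-1) * (a+b) ^ (p-2) * ((a-b)^2 / 2) := by
        have : ∫ t in a..b, (t - a) * ((p-1) * (a+b) ^ (p-2))
            = ((p-1) * (a+b) ^ (p-2)) * ∫ t in a..b, (t - a) := by
          rw [← intervalIntegral.integral_const_mul]
          congr 1; ext t; ring
        rw [this, intervalIntegral.integral_sub ((by continuity : Continuous _).intervalIntegrable _ _)
          ((by continuity : Continuous _).intervalIntegrable _ _), intervalIntegral.integral_const,
          integral_id]
        simp only [smul_eq_mul]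
        ring
      rw [hcomb]
      calc (p - 1) / 2 * ((a - b) ^ 2 * (a + b) ^ (p - 2))
          = (p-1) * (a+b) ^ (p-2) * ((a-b)^2 / 2) := by ring
        _ = ∫ t in a..b, (t - a) * ((p-1) * (a+b) ^ (p-2)) := hval.symm
        _ ≤ _ := hmono

end BregmanSection

lemma my_add_rpow {a b p : ℝ} (ha : 0 ≤ a) (hb : 0 ≤ b) (hp : 1 ≤ p) :
    (a + b) ^ p ≤ 2 ^ (p - 1) * (a ^ p + b ^ p) := by
  have h := NNReal.rpow_add_le_mul_rpow_add_rpow a.toNNReal b.toNNReal hp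
  have h2 := NNReal.coe_le_coe.mpr h
  push_cast at h2
  simpa [Real.coe_toNNReal a ha, Real.coe_toNNReal b hb] using h2

/-- Eq. (hlow2): for `2 < q < 4`, `U ≥ 0` with `‖U‖_{q/(q-2)} = 1` and `ψ ∈ L^q` nonzero, the
Hölder remainder `H[ψ,U] = ‖ψ‖_q² − ∫ U ψ²` satisfies
`H[ψ,U] ≥ ((q-2)/8) ‖ψ‖_q² ‖ |ψ|²/‖ψ‖_q² − U^{2/(q-2)} ‖_{q/2}²`. -/
theorem stmt10 {X : Type*} [MeasurableSpace X] (μ : Measure X) (q : ℝ)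
    (hq1 : 2 < q) (hq2 : q < 4) (U ψ : X → ℝ) (hU0 : ∀ x, 0 ≤ U x)
    (hU : MemLp U (ENNReal.ofReal (q / (q - 2))) μ)
    (hψ : MemLp ψ (ENNReal.ofReal q) μ)
    (hUn : Lnorm μ (q / (q - 2)) U = 1) (hψn : 0 < Lnorm μ q ψ) :
    (Lnorm μ q ψ) ^ 2 - ∫ x, U x * (ψ x) ^ 2 ∂μ ≥
      (q - 2) / 8 * (Lnorm μ q ψ) ^ 2 *
        (Lnorm μ (q / 2)
          (fun x => (ψ x) ^ 2 / (Lnorm μ q ψ) ^ 2 - U x ^ (2 / (q - 2)))) ^ 2 := by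
  have hq0 : (0:ℝ) < q := by linarith
  have hq2' : (0:ℝ) < q - 2 := by linarith
  set p : ℝ := q / 2 with hp_def
  have hp1 : 1 < p := by rw [hp_def]; linarith
  have hp2 : p < 2 := by rw [hp_def]; linarith
  have hp0 : (0:ℝ) < p := by linarith
  have hp1' : p - 1 > 0 := by linarith
  set N : ℝ := Lnorm μ q ψ with hN
  have hN0 : (0:ℝ) < N := hψn
  have hNq : (0:ℝ) < N ^ q := Real.rpow_pos_of_pos hN0 q
  have hN2 : (0:ℝ) < N ^ (2:ℕ) := by positivity
  -- ψ integral facts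
  have hIψ_int : Integrable (fun x => |ψ x| ^ q) μ := by
    have h1 := hψ.integrable_norm_rpow (by simp [ENNReal.ofReal_eq_zero]; linarith)
      ENNReal.ofReal_ne_top
    simpa [ENNReal.toReal_ofReal hq0.le, Real.norm_eq_abs] using h1
  have hIψnn : 0 ≤ ∫ x, |ψ x| ^ q ∂μ :=
    integral_nonneg fun x => Real.rpow_nonneg (abs_nonneg _) _
  have hIψ : ∫ x, |ψ x| ^ q ∂μ = N ^ q := by
    rw [hN]; unfold Lnorm
    rw [← Real.rpow_mul hIψnn, one_div, inv_mul_cancel₀ hq0.ne', Real.rpow_one]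
  -- U integral facts
  have hr0 : (0:ℝ) < q / (q - 2) := by positivity
  have hIU_int : Integrable (fun x => U x ^ (q / (q - 2))) μ := by
    have h1 := hU.integrable_norm_rpow
      (by simp [ENNReal.ofReal_eq_zero]; positivity) ENNReal.ofReal_ne_top
    rw [ENNReal.toReal_ofReal hr0.le] at h1
    refine h1.congr (ae_of_all _ fun x => ?_)
    simp [Real.norm_eq_abs, abs_of_nonneg (hU0 x)]
  have hIUnn : 0 ≤ ∫ x, U x ^ (q / (q - 2)) ∂μ :=
    integral_nonneg fun x => Real.rpow_nonneg (hU0 x) _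
  have hIU : ∫ x, U x ^ (q / (q - 2)) ∂μ = 1 := by
    have habs : ∫ x, |U x| ^ (q / (q - 2)) ∂μ = ∫ x, U x ^ (q / (q - 2)) ∂μ :=
      integral_congr_ae (ae_of_all _ fun x => by simp [abs_of_nonneg (hU0 x)])
    have h1 : (∫ x, U x ^ (q / (q - 2)) ∂μ) ^ ((q-2)/q) = 1 := by
      have := hUn
      unfold Lnorm at this
      rw [habs, one_div, ← one_div] at this
      rw [show (q-2)/q = 1/(q/(q-2)) by field_simp]
      exact this
    calc ∫ x, U x ^ (q / (q - 2)) ∂μ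
        = ((∫ x, U x ^ (q / (q - 2)) ∂μ) ^ ((q-2)/q)) ^ (q/(q-2)) := by
          rw [← Real.rpow_mul hIUnn]
          rw [show (q-2)/q * (q/(q-2)) = 1 by field_simp, Real.rpow_one]
      _ = 1 := by rw [h1, Real.one_rpow]
  -- the functions g and h
  set g : X → ℝ := fun x => ψ x ^ 2 / N ^ 2 with hg_def
  set h : X → ℝ := fun x => U x ^ (2 / (q - 2)) with hh_def
  have hg0 : ∀ x, 0 ≤ g x := fun x => div_nonneg (sq_nonneg _) (sq_nonneg _)
  have hh0 : ∀ x, 0 ≤ h x := fun x => Real.rpow_nonneg (hU0 x) _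
  have hgp : ∀ x, g x ^ p = |ψ x| ^ q / N ^ q := by
    intro x
    rw [hg_def]
    simp only
    rw [Real.div_rpow (sq_nonneg _) (sq_nonneg _)]
    have e2 : ((2:ℕ):ℝ) * p = q := by push_cast; rw [hp_def]; ring
    congr 1
    · rw [← sq_abs, ← Real.rpow_natCast |ψ x| 2, ← Real.rpow_mul (abs_nonneg _), e2]
    · rw [← Real.rpow_natCast N 2, ← Real.rpow_mul hN0.le, e2]
  have hgp_int : Integrable (fun x => g x ^ p) μ := by
    simp only [hgp]
    exact hIψ_int.div_const _
  have hgp1 : ∫ x, g x ^ p ∂μ = 1 := by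
    simp only [hgp]
    rw [integral_div, hIψ, div_self hNq.ne']
  have hhp : ∀ x, h x ^ p = U x ^ (q / (q - 2)) := by
    intro x
    rw [hh_def]
    simp only
    rw [← Real.rpow_mul (hU0 x)]
    congr 1
    rw [hp_def]; field_simp
  have hhp_int : Integrable (fun x => h x ^ p) μ := by simp only [hhp]; exact hIU_int
  have hhp1 : ∫ x, h x ^ p ∂μ = 1 := by simp only [hhp]; exact hIU
  have hhq : ∀ x, h x ^ (p - 1) = U x := by
    intro x
    rw [hh_def]
    simp only
    rw [← Real.rpow_mul (hU0 x)]
    rw [show 2 / (q-2) * (p - 1) = 1 by rw [hp_def]; field_simp, Real.rpow_one]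
  -- measurability
  have hψm : AEStronglyMeasurable ψ μ := hψ.1
  have hUm : AEStronglyMeasurable U μ := hU.1
  have hgm : AEStronglyMeasurable g μ := by
    apply AEMeasurable.aestronglyMeasurable
    exact (hψm.aemeasurable.pow_const (2:ℕ)).div_const _
  have hhm : AEStronglyMeasurable h μ := by
    apply AEMeasurable.aestronglyMeasurable
    exact hUm.aemeasurable.pow_const _
  -- integrability of U * g
  have hr_conj : (q / (q - 2)).HolderConjugate p := by
    refine ⟨?_, hr0, hp0⟩
    rw [hp_def, inv_div, inv_div, inv_one, ← add_div, sub_add_cancel, div_self hq0.ne']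
  have hUg_int : Integrable (fun x => U x * g x) μ := by
    apply Integrable.mono' ((hIU_int.div_const (q/(q-2))).add (hgp_int.div_const p))
    · exact (hUm.aemeasurable.mul hgm.aemeasurable).aestronglyMeasurable
    · refine ae_of_all _ fun x => ?_
      rw [Real.norm_eq_abs, abs_of_nonneg (mul_nonneg (hU0 x) (hg0 x))]
      exact Real.young_inequality_of_nonneg (hU0 x) (hg0 x) hr_conj
  -- the Bregman integrand
  set D : X → ℝ := fun x => g x ^ p / p + (p - 1) / p * h x ^ p - U x * g x with hD_def
  have h_add_int0 : Integrable (fun x => g x ^ p / p + (p - 1) / p * h x ^ p) μ :=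
    (hgp_int.div_const p).add (hhp_int.const_mul _)
  have hD_int : Integrable D μ := h_add_int0.sub hUg_int
  have h_add_int : Integrable (fun x => g x ^ p / p + (p - 1) / p * h x ^ p) μ :=
    (hgp_int.div_const p).add (hhp_int.const_mul _)
  have hD_eq : ∫ x, D x ∂μ = 1 - ∫ x, U x * g x ∂μ := by
    rw [hD_def]
    rw [integral_sub h_add_int hUg_int]
    rw [integral_add (hgp_int.div_const p) (hhp_int.const_mul _)]
    rw [integral_div, integral_const_mul, hgp1, hhp1]
    field_simp
    ring
  set W : X → ℝ := fun x => (g x - h x) ^ 2 * (g x + h x) ^ (p - 2) with hW_def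
  have hW0 : ∀ x, 0 ≤ W x := fun x =>
    mul_nonneg (sq_nonneg _) (Real.rpow_nonneg (add_nonneg (hg0 x) (hh0 x)) _)
  have hDW : ∀ x, (p - 1) / 2 * W x ≤ D x := by
    intro x
    have hb := my_bregman hp1 hp2 (hg0 x) (hh0 x)
    rw [hD_def, hW_def]
    simp only
    rw [show U x * g x = g x * h x ^ (p-1) by rw [hhq x]; ring]
    linarith [hb]
  have hD0 : ∀ x, 0 ≤ D x := fun x =>
    le_trans (mul_nonneg (by linarith : (0:ℝ) ≤ (p-1)/2) (hW0 x)) (hDW x)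
  have hWm : AEStronglyMeasurable W μ := by
    apply AEMeasurable.aestronglyMeasurable
    exact ((hgm.aemeasurable.sub hhm.aemeasurable).pow_const (2:ℕ)).mul
      ((hgm.aemeasurable.add hhm.aemeasurable).pow_const (p-2))
  have hW_int : Integrable W μ := by
    apply Integrable.mono' (hD_int.const_mul (2/(p-1))) hWm
    refine ae_of_all _ fun x => ?_
    rw [Real.norm_eq_abs, abs_of_nonneg (hW0 x)]
    have := hDW x
    rw [← sub_nonneg]
    calc (0:ℝ) ≤ 2/(p-1) * (D x - (p-1)/2 * W x) := by
          apply mul_nonneg (le_of_lt (div_pos two_pos hp1'))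
          linarith
      _ = 2/(p-1) * D x - W x := by field_simp
  set A : ℝ := ∫ x, W x ∂μ with hA_def
  have hA0 : 0 ≤ A := integral_nonneg hW0
  have hDA : (p - 1) / 2 * A ≤ ∫ x, D x ∂μ := by
    rw [hA_def, ← integral_const_mul]
    exact integral_mono (hW_int.const_mul _) hD_int hDW
  -- V = (g+h)^p
  set V : X → ℝ := fun x => (g x + h x) ^ p with hV_def
  have hV0 : ∀ x, 0 ≤ V x := fun x => Real.rpow_nonneg (add_nonneg (hg0 x) (hh0 x)) _
  have hVm : AEStronglyMeasurable V μ := by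
    apply AEMeasurable.aestronglyMeasurable
    exact (hgm.aemeasurable.add hhm.aemeasurable).pow_const p
  have hV_int : Integrable V μ := by
    apply Integrable.mono' ((hgp_int.add hhp_int).const_mul (2 ^ (p-1))) hVm
    refine ae_of_all _ fun x => ?_
    rw [Real.norm_eq_abs, abs_of_nonneg (hV0 x)]
    exact my_add_rpow (hg0 x) (hh0 x) hp1.le
  set B : ℝ := ∫ x, V x ∂μ with hB_def
  have hB0 : 0 ≤ B := integral_nonneg hV0
  have hB : B ≤ 2 ^ p := by
    have h1 : B ≤ ∫ x, 2 ^ (p-1) * (g x ^ p + h x ^ p) ∂μ := by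
      apply integral_mono hV_int ((hgp_int.add hhp_int).const_mul _)
      exact fun x => my_add_rpow (hg0 x) (hh0 x) hp1.le
    rw [integral_const_mul, integral_add hgp_int hhp_int, hgp1, hhp1] at h1
    calc B ≤ 2 ^ (p-1) * (1 + 1) := h1
      _ = 2 ^ p := by
        rw [show p = (p - 1) + 1 by ring, Real.rpow_add_one (by norm_num : (2:ℝ) ≠ 0)]
        ring_nf
  -- Hölder step
  set S : ℝ := ∫ x, |g x - h x| ^ p ∂μ with hS_def
  have hS0 : 0 ≤ S := integral_nonneg fun x => Real.rpow_nonneg (abs_nonneg _) _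
  have hFG : ∀ x, W x ^ (p/2) * V x ^ ((2-p)/2) = |g x - h x| ^ p := by
    intro x
    rcases eq_or_lt_of_le (add_nonneg (hg0 x) (hh0 x)) with hgh | hgh
    · have hgx : g x = 0 := by linarith [hg0 x, hh0 x]
      have hhx : h x = 0 := by linarith [hg0 x, hh0 x]
      have e1 : W x = 0 := by rw [hW_def]; simp [hgx, hhx]
      have e2 : |g x - h x| ^ p = 0 := by
        rw [hgx, hhx]; simp [Real.zero_rpow hp0.ne']
      rw [e1, e2, Real.zero_rpow (ne_of_gt (div_pos hp0 two_pos)), zero_mul]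
    · rw [hW_def, hV_def]
      simp only
      rw [Real.mul_rpow (sq_nonneg _) (Real.rpow_nonneg hgh.le _)]
      rw [← Real.rpow_mul hgh.le, ← Real.rpow_mul hgh.le]
      rw [← sq_abs (g x - h x), ← Real.rpow_natCast |g x - h x| 2,
        ← Real.rpow_mul (abs_nonneg _)]
      rw [show ((2:ℕ):ℝ) * (p/2) = p by push_cast; ring]
      rw [mul_assoc, ← Real.rpow_add hgh]
      rw [show (p-2) * (p/2) + p * ((2-p)/2) = 0 by ring, Real.rpow_zero, mul_one]
  have hconj2 : (2/p).HolderConjugate (2/(2-p)) := by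
    refine ⟨?_, div_pos two_pos hp0, div_pos two_pos (by linarith)⟩
    rw [inv_div, inv_div, inv_one]; ring
  have hF_mem : MemLp (fun x => W x ^ (p/2)) (ENNReal.ofReal (2/p)) μ := by
    have h1 : MemLp W 1 μ := memLp_one_iff_integrable.mpr hW_int
    have h2 := h1.norm_rpow_div (ENNReal.ofReal (p/2))
    rw [ENNReal.toReal_ofReal (by positivity : (0:ℝ) ≤ p/2)] at h2
    have h3 : (fun x => ‖W x‖ ^ (p/2)) = fun x => W x ^ (p/2) := by
      funext x; rw [Real.norm_eq_abs, abs_of_nonneg (hW0 x)]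
    rw [h3] at h2
    have h4 : 1 / ENNReal.ofReal (p/2) = ENNReal.ofReal (2/p) := by
      rw [one_div, ← ENNReal.ofReal_inv_of_pos (by positivity)]
      congr 1
      rw [inv_div]
    rwa [h4] at h2
  have hG_mem : MemLp (fun x => V x ^ ((2-p)/2)) (ENNReal.ofReal (2/(2-p))) μ := by
    have h1 : MemLp V 1 μ := memLp_one_iff_integrable.mpr hV_int
    have h2 := h1.norm_rpow_div (ENNReal.ofReal ((2-p)/2))
    rw [ENNReal.toReal_ofReal (le_of_lt (div_pos (by linarith) two_pos)) ] at h2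
    have h3 : (fun x => ‖V x‖ ^ ((2-p)/2)) = fun x => V x ^ ((2-p)/2) := by
      funext x; rw [Real.norm_eq_abs, abs_of_nonneg (hV0 x)]
    rw [h3] at h2
    have h4 : 1 / ENNReal.ofReal ((2-p)/2) = ENNReal.ofReal (2/(2-p)) := by
      rw [one_div, ← ENNReal.ofReal_inv_of_pos (div_pos (by linarith) two_pos)]
      congr 1
      rw [inv_div]
    rwa [h4] at h2
  have hHolder : S ≤ A ^ (p/2) * B ^ ((2-p)/2) := by
    have h1 := integral_mul_le_Lp_mul_Lq_of_nonneg hconj2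
      (ae_of_all _ fun x => Real.rpow_nonneg (hW0 x) _)
      (ae_of_all _ fun x => Real.rpow_nonneg (hV0 x) _) hF_mem hG_mem
    have h2 : ∫ x, W x ^ (p/2) * V x ^ ((2-p)/2) ∂μ = S := by
      rw [hS_def]; exact integral_congr_ae (ae_of_all _ hFG)
    have h3 : ∫ x, (W x ^ (p/2)) ^ (2/p) ∂μ = A := by
      rw [hA_def]
      refine integral_congr_ae (ae_of_all _ fun x => ?_)
      show (W x ^ (p/2)) ^ (2/p) = W x
      rw [← Real.rpow_mul (hW0 x), show p/2 * (2/p) = 1 by field_simp, Real.rpow_one]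
    have h4 : ∫ x, (V x ^ ((2-p)/2)) ^ (2/(2-p)) ∂μ = B := by
      rw [hB_def]
      refine integral_congr_ae (ae_of_all _ fun x => ?_)
      show (V x ^ ((2-p)/2)) ^ (2/(2-p)) = V x
      have hne : (2:ℝ) - p ≠ 0 := by linarith
      rw [← Real.rpow_mul (hV0 x), show (2-p)/2 * (2/(2-p)) = 1 by field_simp, Real.rpow_one]
    rw [h2, h3, h4] at h1
    rw [show 1/(2/p) = p/2 by rw [one_div_div], show 1/(2/(2-p)) = (2-p)/2 by rw [one_div_div]]
      at h1
    exact h1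
  -- key : S^(2/p) ≤ 2 * A
  have hkey : S ^ (2/p) ≤ 2 * A := by
    have h1 : S ^ (2/p) ≤ (A ^ (p/2) * B ^ ((2-p)/2)) ^ (2/p) :=
      Real.rpow_le_rpow hS0 hHolder (le_of_lt (div_pos two_pos hp0))
    have h2 : (A ^ (p/2) * B ^ ((2-p)/2)) ^ (2/p) = A * B ^ ((2-p)/p) := by
      rw [Real.mul_rpow (Real.rpow_nonneg hA0 _) (Real.rpow_nonneg hB0 _)]
      rw [← Real.rpow_mul hA0, ← Real.rpow_mul hB0]
      rw [show p/2 * (2/p) = 1 by field_simp, Real.rpow_one]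
      congr 2
      field_simp
    have h3 : B ^ ((2-p)/p) ≤ 2 := by
      calc B ^ ((2-p)/p) ≤ (2 ^ p) ^ ((2-p)/p) := Real.rpow_le_rpow hB0 hB (le_of_lt (div_pos (by linarith) hp0))
        _ = 2 ^ (2-p) := by
          rw [← Real.rpow_mul (by norm_num : (0:ℝ) ≤ 2)]
          congr 1
          field_simp
        _ ≤ 2 ^ (1:ℝ) := Real.rpow_le_rpow_of_exponent_le (by norm_num) (by linarith)
        _ = 2 := Real.rpow_one 2
    calc S ^ (2/p) ≤ A * B ^ ((2-p)/p) := h2 ▸ h1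
      _ ≤ A * 2 := mul_le_mul_of_nonneg_left h3 hA0
      _ = 2 * A := mul_comm _ _
  -- assemble
  have hUψ : ∫ x, U x * ψ x ^ 2 ∂μ = N ^ (2:ℕ) * ∫ x, U x * g x ∂μ := by
    rw [← integral_const_mul]
    refine integral_congr_ae (ae_of_all _ fun x => ?_)
    rw [hg_def]
    simp only
    field_simp
  have hL : Lnorm μ (q/2) (fun x => ψ x ^ 2 / N ^ 2 - U x ^ (2/(q-2))) = S ^ (1/p) := by
    rw [hS_def]
    unfold Lnorm
    rfl
  have hL2 : (Lnorm μ (q/2) (fun x => ψ x ^ 2 / N ^ 2 - U x ^ (2/(q-2)))) ^ (2:ℕ)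
      = S ^ (2/p) := by
    rw [hL, ← Real.rpow_natCast (S ^ (1/p)) 2, ← Real.rpow_mul hS0]
    congr 1
    push_cast
    field_simp
  rw [ge_iff_le]
  have hmain : (q-2)/8 * S ^ (2/p) ≤ ∫ x, D x ∂μ := by
    have : (q-2)/8 * S ^ (2/p) ≤ (p-1)/2 * A := by
      have : (q-2)/8 * S ^ (2/p) = (p-1)/4 * S ^ (2/p) := by
        rw [hp_def]; ring
      rw [this]
      calc (p-1)/4 * S ^ (2/p) ≤ (p-1)/4 * (2 * A) := by
            apply mul_le_mul_of_nonneg_left hkey (by positivity)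
        _ = (p-1)/2 * A := by ring
    linarith [hDA]
  calc (q-2)/8 * N ^ (2:ℕ) * (Lnorm μ (q/2) (fun x => ψ x ^ 2 / N ^ 2 - U x ^ (2/(q-2)))) ^ (2:ℕ)
      = N ^ (2:ℕ) * ((q-2)/8 * S ^ (2/p)) := by rw [hL2]; ring
    _ ≤ N ^ (2:ℕ) * ∫ x, D x ∂μ := by
        apply mul_le_mul_of_nonneg_left hmain hN2.le
    _ = N ^ (2:ℕ) * (1 - ∫ x, U x * g x ∂μ) := by rw [hD_eq]
    _ = N ^ (2:ℕ) - ∫ x, U x * ψ x ^ 2 ∂μ := by rw [hUψ]; ring
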